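/- arXiv:2602.13460 — 3 statements merged into one kernel-verified Lean document; each statement's English description precedes it below -/
import Mathlib

section
/- Let n ≥ 2, Δ ≥ 2 be reals with μ = log n, and let V₁ be a sum of at most Δ independent Bernoulli random variables each with success probability 1/C where C = Δ/log n (so E[V₁] ≤ log n). Then Pr[V₁ ≥ log n + (log Δ + sqrt((log Δ)² + 8·(log Δ)(log n)))/2] ≤ 1/Δ. -/
open Real MeasureTheory ProbabilityTheory Finset

lemma two_mul_div_le_log' {x : ℝ} (hx : 0 ≤ x) :
    2 * x / (2 + x) ≤ Real.log (1 + x) := by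
  have h2x : (0:ℝ) < 2 + x := by linarith
  set f : ℝ → ℝ := fun y => (2 + y) * Real.log (1 + y) - 2 * y with hf
  have hder : ∀ y : ℝ, 0 ≤ y → HasDerivAt f
      (1 * Real.log (1 + y) + (2 + y) * (1 / (1 + y)) - 2) y := by
    intro y hy0
    have h1y : (1 + y) ≠ 0 := by positivity
    have h1 : HasDerivAt (fun z : ℝ => 1 + z) 1 y := (hasDerivAt_id y).const_add 1
    have hlog : HasDerivAt (fun z : ℝ => Real.log (1 + z)) (1 / (1 + y)) y := by
      simpa [one_div] using h1.log h1y
    have h2 : HasDerivAt (fun z : ℝ => 2 + z) 1 y := (hasDerivAt_id y).const_add 2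
    have h2x' : HasDerivAt (fun z : ℝ => 2 * z) 2 y := by
      simpa using (hasDerivAt_id y).const_mul 2
    exact (h2.mul hlog).sub h2x'
  have hmono : MonotoneOn f (Set.Ici 0) := by
    apply monotoneOn_of_deriv_nonneg (convex_Ici 0)
    · intro y hy
      exact (hder y hy).continuousAt.continuousWithinAt
    · intro y hy
      rw [interior_Ici] at hy
      exact ((hder y (le_of_lt hy)).differentiableAt).differentiableWithinAt
    · intro y hy
      rw [interior_Ici] at hy
      have hy0 : (0:ℝ) < y := hy
      rw [(hder y hy0.le).deriv]
      have h1y : (0:ℝ) < 1 + y := by linarith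
      have hlb : 1 - (1 + y)⁻¹ ≤ Real.log (1 + y) :=
        Real.one_sub_inv_le_log_of_pos h1y
      have hne : (1 + y) ≠ 0 := h1y.ne'
      have e1 : (2 + y) * (1 / (1 + y)) = 2 - y / (1 + y) := by
        field_simp; ring
      have e2 : (1:ℝ) - (1 + y)⁻¹ = y / (1 + y) := by
        field_simp; ring
      rw [one_mul, e1]
      have : y / (1 + y) ≤ Real.log (1 + y) := by rw [← e2]; exact hlb
      linarith
  have h0 : f 0 = 0 := by simp [hf]
  have hfx : 0 ≤ f x := by
    have := hmono (Set.self_mem_Ici) (Set.mem_Ici.mpr hx) hx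
    rw [h0] at this; exact this
  rw [div_le_iff₀ h2x]
  simp only [hf] at hfx
  linarith


/-- Chernoff instantiation: `V₁` is a sum of at most `Δ` independent Bernoulli
random variables with success probability `1/C` where `C = Δ/log n`
(so `E[V₁] ≤ log n`); then
`Pr[V₁ ≥ log n + (log Δ + √((log Δ)² + 8 (log Δ)(log n)))/2] ≤ 1/Δ`. -/
theorem bernoulli_chernoff_instantiation
    {Ω : Type*} [MeasurableSpace Ω] (P : Measure Ω) [IsProbabilityMeasure P]
    (n Δ : ℝ) (hn : 2 ≤ n) (hΔ : 2 ≤ Δ)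
    (m : ℕ) (hm : (m : ℝ) ≤ Δ)
    (X : Fin m → Ω → ℝ)
    (hmeas : ∀ i, Measurable (X i))
    (hindep : iIndepFun X P)
    (hval : ∀ i, ∀ ω, X i ω = 0 ∨ X i ω = 1)
    (hp : ∀ i, P {ω | X i ω = 1} = ENNReal.ofReal (1 / (Δ / Real.log n))) :
    (P {ω | Real.log n +
        (Real.log Δ + Real.sqrt ((Real.log Δ) ^ 2 + 8 * Real.log Δ * Real.log n)) / 2 ≤
        ∑ i, X i ω}).toReal ≤ 1 / Δ := by
  have hΔ0 : (0:ℝ) < Δ := by linarith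
  have hμ : 0 < Real.log n := Real.log_pos (by linarith)
  have hL : 0 < Real.log Δ := Real.log_pos (by linarith)
  set μ := Real.log n with hμdef
  set L := Real.log Δ with hLdef
  set R := Real.sqrt (L ^ 2 + 8 * L * μ) with hRdef
  have hRnn : 0 ≤ R := Real.sqrt_nonneg _
  have hR2 : R ^ 2 = L ^ 2 + 8 * L * μ := Real.sq_sqrt (by positivity)
  set η := (L + R) / (2 * μ) with hηdef
  have hηpos : 0 < η := by
    apply div_pos _ (by linarith)
    nlinarith
  set t := μ + (L + R) / 2 with htdef
  have htη : t = (1 + η) * μ := by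
    rw [htdef, hηdef]; field_simp
  set s := Real.log (1 + η) with hsdef
  have hspos : 0 < s := Real.log_pos (by linarith)
  have hes : Real.exp s = 1 + η := Real.exp_log (by linarith)
  have hes1 : 0 ≤ Real.exp s - 1 := by
    rw [hes]; linarith
  have hkey : η ^ 2 * μ = L * (2 + η) := by
    rw [hηdef]
    field_simp
    nlinarith [hR2]
  -- probability parameter
  set p : ℝ := 1 / (Δ / μ) with hpdef
  have hp0 : 0 < p := by
    rw [hpdef]; positivity
  have hΔp : Δ * p = μ := by
    rw [hpdef]; field_simp
  -- measurability of the Bernoulli sets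
  have hA : ∀ i, MeasurableSet {ω | X i ω = 1} :=
    fun i => (hmeas i) (measurableSet_singleton 1)
  -- pointwise structure of exp (s * X i ω)
  have hpoint : ∀ i, (fun ω => Real.exp (s * X i ω)) =
      fun ω => Set.indicator {ω | X i ω = 1} (fun _ => Real.exp s - 1) ω + 1 := by
    intro i
    funext ω
    rcases hval i ω with h | h
    · simp only [Set.indicator_apply, Set.mem_setOf_eq, h]
      norm_num
    · simp only [Set.indicator_apply, Set.mem_setOf_eq, h]
      norm_num
  have hintI : ∀ i, Integrable (fun ω => Real.exp (s * X i ω)) P := by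
    intro i
    rw [hpoint i]
    exact ((integrable_const _).indicator (hA i)).add (integrable_const 1)
  -- mgf of each Bernoulli
  have hmgf : ∀ i, mgf (X i) P s = 1 + (Real.exp s - 1) * p := by
    intro i
    rw [mgf, hpoint i,
      integral_add ((integrable_const _).indicator (hA i)) (integrable_const 1),
      integral_indicator_const _ (hA i), integral_const, measureReal_def, hp i,
      ENNReal.toReal_ofReal hp0.le]
    simp only [smul_eq_mul, measureReal_def, measure_univ, ENNReal.toReal_one]
    ring
  -- Chernoff bound
  have hintS : Integrable (fun ω => Real.exp (s * (∑ i, X i) ω)) P :=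
    hindep.integrable_exp_mul_sum hmeas (fun i _ => hintI i)
  have hch := measure_ge_le_exp_mul_mgf (μ := P) (X := ∑ i, X i) t hspos.le hintS
  have hsum : mgf (∑ i, X i) P s = (1 + (Real.exp s - 1) * p) ^ m := by
    rw [hindep.mgf_sum hmeas Finset.univ]
    simp [hmgf]
  -- bound the mgf
  have hbase : 0 ≤ 1 + (Real.exp s - 1) * p := by nlinarith
  have hmgf_le : mgf (∑ i, X i) P s ≤ Real.exp (μ * (Real.exp s - 1)) := by
    rw [hsum]
    calc (1 + (Real.exp s - 1) * p) ^ m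
        ≤ Real.exp ((Real.exp s - 1) * p) ^ m := by
          apply pow_le_pow_left₀ hbase
          linarith [Real.add_one_le_exp ((Real.exp s - 1) * p)]
      _ = Real.exp ((m : ℝ) * ((Real.exp s - 1) * p)) := by
          rw [← Real.exp_nat_mul]
      _ ≤ Real.exp (μ * (Real.exp s - 1)) := by
          apply Real.exp_le_exp.mpr
          have : (m : ℝ) * ((Real.exp s - 1) * p) ≤ Δ * ((Real.exp s - 1) * p) := by
            apply mul_le_mul_of_nonneg_right hm (by positivity)
          calc (m : ℝ) * ((Real.exp s - 1) * p) ≤ Δ * ((Real.exp s - 1) * p) := this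
            _ = (Real.exp s - 1) * (Δ * p) := by ring
            _ = μ * (Real.exp s - 1) := by rw [hΔp]; ring
  -- numeric estimate of the exponent
  have hexp_le : μ * (Real.exp s - 1) - s * t ≤ -L := by
    rw [hes, htη]
    have haux : 2 * η / (2 + η) ≤ s := by
      rw [hsdef]; exact two_mul_div_le_log' hηpos.le
    have h2η : (0:ℝ) < 2 + η := by linarith
    rw [div_le_iff₀ h2η] at haux
    have h1 : 2 * η * ((1 + η) * μ) ≤ s * (2 + η) * ((1 + η) * μ) :=
      mul_le_mul_of_nonneg_right haux (by positivity)
    have h2 : (μ * η - s * ((1 + η) * μ)) * (2 + η) ≤ -L * (2 + η) := by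
      calc (μ * η - s * ((1 + η) * μ)) * (2 + η)
          = μ * η * (2 + η) - s * (2 + η) * ((1 + η) * μ) := by ring
        _ ≤ μ * η * (2 + η) - 2 * η * ((1 + η) * μ) := by linarith
        _ = -(η ^ 2 * μ) := by ring
        _ = -(L * (2 + η)) := by rw [hkey]
        _ = -L * (2 + η) := by ring
    have hg : μ * η - s * ((1 + η) * μ) ≤ -L := le_of_mul_le_mul_right h2 h2η
    linarith
  -- put everything together
  have hfinal : Real.exp (-s * t) * mgf (∑ i, X i) P s ≤ 1 / Δ := by
    calc Real.exp (-s * t) * mgf (∑ i, X i) P s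
        ≤ Real.exp (-s * t) * Real.exp (μ * (Real.exp s - 1)) := by
          apply mul_le_mul_of_nonneg_left hmgf_le (Real.exp_nonneg _)
      _ = Real.exp (μ * (Real.exp s - 1) - s * t) := by
          rw [← Real.exp_add]; ring_nf
      _ ≤ Real.exp (-L) := Real.exp_le_exp.mpr hexp_le
      _ = 1 / Δ := by
          rw [hLdef, Real.exp_neg, Real.exp_log hΔ0, one_div]
  have hseteq : {ω | t ≤ ∑ i, X i ω} = {ω | t ≤ (∑ i, X i) ω} := by
    ext ω
    simp [Finset.sum_apply]
  rw [hseteq]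
  exact hch.trans hfinal
end

section
/- Let H be a nonempty finite set and s : H → ℝ a score function with sensitivity GS (a positive real). Consider the exponential mechanism that outputs h ∈ H with probability proportional to exp(ε·s(h)/(2·GS)). Let OPT = max_{h∈H} s(h) and H* = {h ∈ H : s(h) = OPT}. Then for any t ≥ 0, Pr[s(output) ≤ OPT - (2·GS/ε)·(log(|H|/|H*|) + t)] ≤ exp(-t). -/
open Real Finset
open scoped Classical

/-- Utility guarantee of the exponential mechanism: over a finite nonempty
candidate set `H` with scores `s`, sensitivity `GS`, outputting `h` with
probability proportional to `exp(ε s(h)/(2 GS))`, the probability that the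
output scores at most `OPT - (2GS/ε)(log(|H|/|H*|) + t)` is at most `e^{-t}`. -/
theorem exp_mechanism_utility
    {H : Type*} [Fintype H] [Nonempty H]
    (s : H → ℝ) (GS ε t : ℝ) (hGS : 0 < GS) (hε : 0 < ε) (ht : 0 ≤ t) :
    (∑ h ∈ Finset.univ.filter (fun h => s h ≤
        (Finset.univ.sup' Finset.univ_nonempty s) -
          (2 * GS / ε) * (Real.log ((Fintype.card H : ℝ) /
            ((Finset.univ.filter (fun h => s h =
              Finset.univ.sup' Finset.univ_nonempty s)).card : ℝ)) + t)),
        Real.exp (ε * s h / (2 * GS))) /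
      (∑ h, Real.exp (ε * s h / (2 * GS))) ≤ Real.exp (-t) := by
  set OPT := Finset.univ.sup' Finset.univ_nonempty s with hOPT
  set K : ℕ := (Finset.univ.filter (fun h => s h = OPT)).card with hK
  have hKpos : 0 < K := by
    rw [hK, Finset.card_pos]
    obtain ⟨h, -, hs⟩ := Finset.exists_mem_eq_sup' Finset.univ_nonempty s
    exact ⟨h, by simp [← hs, hOPT]⟩
  have hKR : (0:ℝ) < (K:ℝ) := by exact_mod_cast hKpos
  have hNR : (0:ℝ) < (Fintype.card H : ℝ) := by exact_mod_cast Fintype.card_pos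
  set B : ℝ := OPT - (2 * GS / ε) * (Real.log ((Fintype.card H : ℝ) / (K:ℝ)) + t) with hB
  have hdenom : (K:ℝ) * Real.exp (ε * OPT / (2*GS)) ≤ ∑ h, Real.exp (ε * s h / (2 * GS)) := by
    have : (K:ℝ) * Real.exp (ε * OPT / (2*GS))
        = ∑ h ∈ Finset.univ.filter (fun h => s h = OPT), Real.exp (ε * s h / (2 * GS)) := by
      rw [Finset.sum_congr rfl (fun h hh => by
        rw [(Finset.mem_filter.mp hh).2]), Finset.sum_const, nsmul_eq_mul, hK]
    rw [this]
    exact Finset.sum_le_sum_of_subset_of_nonneg (Finset.filter_subset _ _)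
      (fun _ _ _ => (Real.exp_pos _).le)
  have hdpos : 0 < ∑ h, Real.exp (ε * s h / (2 * GS)) :=
    lt_of_lt_of_le (by positivity) hdenom
  rw [div_le_iff₀ hdpos]
  have hkey : Real.exp (ε * B / (2 * GS))
      = Real.exp (ε * OPT / (2 * GS)) * ((K:ℝ) / (Fintype.card H : ℝ)) * Real.exp (-t) := by
    have h1 : ε * B / (2 * GS) = ε * OPT / (2 * GS) - (Real.log ((Fintype.card H : ℝ) / (K:ℝ)) + t) := by
      rw [hB]; field_simp [hε.ne', hGS.ne']
    rw [h1, show ε * OPT / (2 * GS) - (Real.log ((Fintype.card H : ℝ) / (K:ℝ)) + t)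
        = ε * OPT / (2 * GS) + (-Real.log ((Fintype.card H : ℝ) / (K:ℝ))) + (-t) by ring,
      Real.exp_add, Real.exp_add, Real.exp_neg, Real.exp_log (div_pos hNR hKR), inv_div]
  calc ∑ h ∈ Finset.univ.filter (fun h => s h ≤ B), Real.exp (ε * s h / (2 * GS))
      ≤ ∑ _h ∈ Finset.univ.filter (fun h => s h ≤ B), Real.exp (ε * B / (2 * GS)) := by
        refine Finset.sum_le_sum (fun h hh => Real.exp_le_exp.mpr ?_)
        have hs := (Finset.mem_filter.mp hh).2
        have : ε * s h ≤ ε * B := by nlinarith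
        have h2 : (0:ℝ) < 2 * GS := by linarith
        exact div_le_div_of_nonneg_right this h2.le
    _ = ((Finset.univ.filter (fun h => s h ≤ B)).card : ℝ) * Real.exp (ε * B / (2 * GS)) := by
        rw [Finset.sum_const, nsmul_eq_mul]
    _ ≤ (Fintype.card H : ℝ) * Real.exp (ε * B / (2 * GS)) := by
        have : ((Finset.univ.filter (fun h => s h ≤ B)).card : ℝ) ≤ (Fintype.card H : ℝ) := by
          exact_mod_cast Finset.card_filter_le _ _
        exact mul_le_mul_of_nonneg_right this (Real.exp_pos _).le
    _ = Real.exp (-t) * ((K:ℝ) * Real.exp (ε * OPT / (2 * GS))) := by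
        rw [hkey]; field_simp [hNR.ne', hKR.ne']
    _ ≤ Real.exp (-t) * ∑ h, Real.exp (ε * s h / (2 * GS)) :=
        mul_le_mul_of_nonneg_left hdenom (Real.exp_pos _).le
end

section
/- Let a vertex be recolored by the exponential mechanism over a palette of size C = Δ/log n using score s(c) = -(number of neighbors colored c), which has sensitivity 1, where the vertex has degree at most Δ. The optimal score satisfies OPT ≥ -log n (some color is used by at most Δ/C = log n neighbors). Then with probability at least 1 - 1/n², the chosen color c satisfies (number of neighbors colored c) ≤ (1 + 4/ε)·log n + (2/ε)·log Δ. -/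
open Real Finset
open scoped Classical

set_option maxHeartbeats 1000000 in
/-- Recoloring a vertex by the exponential mechanism over a palette of
`C = Δ/log n` colors with score `-(number of neighbors colored c)`
(sensitivity 1): with probability at least `1 - 1/n²` the chosen color `c`
satisfies `count(c) ≤ (1 + 4/ε) log n + (2/ε) log Δ`. -/
theorem recolor_utility
    (n Δ ε : ℝ) (hn : 2 ≤ n) (hΔ : 2 ≤ Δ) (hε : 0 < ε)
    (C : ℕ) (hC1 : 1 ≤ C) (hC : (C : ℝ) = Δ / Real.log n)
    (f : Fin C → ℕ) (hsum : (∑ i, (f i : ℝ)) ≤ Δ) :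
    (∑ i ∈ Finset.univ.filter
        (fun i => (1 + 4 / ε) * Real.log n + (2 / ε) * Real.log Δ < (f i : ℝ)),
        Real.exp (-(ε * (f i : ℝ)) / 2)) /
      (∑ i, Real.exp (-(ε * (f i : ℝ)) / 2)) ≤ 1 / n ^ 2 := by
  set L := Real.log n with hL
  set D := Real.log Δ with hD
  set T := (1 + 4 / ε) * L + (2 / ε) * D with hT
  clear_value T
  clear_value L D
  have hn0 : (0:ℝ) < n := by linarith
  have hΔ0 : (0:ℝ) < Δ := by linarith
  have hlog2 : (0.693:ℝ) < Real.log 2 := by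
    have := Real.log_two_gt_d9; linarith
  have hL2 : Real.log 2 ≤ L := by rw [hL]; exact Real.log_le_log (by norm_num) hn
  have hD2 : Real.log 2 ≤ D := by rw [hD]; exact Real.log_le_log (by norm_num) hΔ
  have hL0 : 0 < L := by linarith
  have hD0 : 0 < D := by linarith
  have hT0 : 0 < T := by
    have h1 : 0 < 1 + 4/ε := by positivity
    have h2 : 0 < 2/ε := by positivity
    nlinarith [mul_pos h1 hL0, mul_pos h2 hD0]
  have hCL : (C:ℝ) * L = Δ := by
    rw [hC]; field_simp
  -- pigeonhole: some color is light
  obtain ⟨i0, hi0⟩ : ∃ i0 : Fin C, (f i0 : ℝ) ≤ L := by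
    by_contra h
    push_neg at h
    have hne : (Finset.univ : Finset (Fin C)).Nonempty := ⟨⟨0, hC1⟩, mem_univ _⟩
    have hlt : (C:ℝ) * L < ∑ i, (f i : ℝ) := by
      have := Finset.sum_lt_sum_of_nonempty hne (fun i _ => h i)
      simpa [Finset.sum_const, Finset.card_univ, nsmul_eq_mul, mul_comm] using this
    linarith
  -- denominator lower bound
  have hden : Real.exp (-(ε * (f i0:ℝ))/2) ≤ ∑ i, Real.exp (-(ε * (f i:ℝ))/2) :=
    Finset.single_le_sum (f := fun i => Real.exp (-(ε * (f i:ℝ))/2)) (fun i _ => (Real.exp_pos _).le) (mem_univ i0)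
  have hdenpos : 0 < ∑ i, Real.exp (-(ε*(f i:ℝ))/2) := lt_of_lt_of_le (Real.exp_pos _) hden
  set S := Finset.univ.filter (fun i : Fin C => T < (f i:ℝ)) with hS
  -- numerator upper bound
  have hnum : (∑ i ∈ S, Real.exp (-(ε*(f i:ℝ))/2)) ≤ (S.card : ℝ) * Real.exp (-(ε*T)/2) := by
    have hb : ∀ i ∈ S, Real.exp (-(ε*(f i:ℝ))/2) ≤ Real.exp (-(ε*T)/2) := by
      intro i hi
      have hTi : T < (f i:ℝ) := (Finset.mem_filter.mp hi).2
      apply Real.exp_le_exp.mpr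
      nlinarith [mul_lt_mul_of_pos_left hTi hε]
    calc (∑ i ∈ S, Real.exp (-(ε*(f i:ℝ))/2))
        ≤ ∑ _i ∈ S, Real.exp (-(ε*T)/2) := Finset.sum_le_sum hb
      _ = (S.card : ℝ) * Real.exp (-(ε*T)/2) := by
          rw [Finset.sum_const, nsmul_eq_mul]
  have hKC : (S.card : ℝ) ≤ (C : ℝ) := by
    exact_mod_cast (Finset.card_le_univ S).trans_eq (by simp)
  have hKT : (S.card:ℝ) * T ≤ Δ := by
    have h1 : (S.card:ℝ) * T = ∑ _i ∈ S, T := by rw [Finset.sum_const, nsmul_eq_mul]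
    have h2 : (∑ _i ∈ S, T) ≤ ∑ i ∈ S, (f i:ℝ) :=
      Finset.sum_le_sum (fun i hi => ((Finset.mem_filter.mp hi).2).le)
    have h3 : (∑ i ∈ S, (f i:ℝ)) ≤ ∑ i, (f i:ℝ) :=
      Finset.sum_le_sum_of_subset_of_nonneg (Finset.filter_subset _ _)
        (fun i _ _ => by positivity)
    linarith
  have hexp2 : Real.exp (2*L + D) = n^2 * Δ := by
    have h : 2*L + D = L + (L + D) := by ring
    rw [h, Real.exp_add, Real.exp_add, hL, hD, Real.exp_log hn0, Real.exp_log hΔ0]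
    ring
  -- key inequality
  have hkey : (S.card:ℝ) * n^2 ≤ Real.exp (ε * (T - (f i0:ℝ)) / 2) := by
    by_cases hL1 : 1 ≤ L
    · -- K ≤ C = Δ/L ≤ Δ, and ε(T - m)/2 ≥ 2L + D
      have hCΔ : (C:ℝ) ≤ Δ := by nlinarith
      have harg : 2*L + D ≤ ε * (T - (f i0:ℝ)) / 2 := by
        have : ε * (T - L) / 2 = 2*L + D := by
          field_simp [hT]; rw [hT]; field_simp; ring
        nlinarith
      calc (S.card:ℝ) * n^2 ≤ Δ * n^2 := by nlinarith [sq_nonneg n]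
        _ = Real.exp (2*L + D) := by rw [hexp2]; ring
        _ ≤ _ := Real.exp_le_exp.mpr harg
    · push_neg at hL1
      have hf0 : f i0 = 0 := by
        have : (f i0 : ℝ) < 1 := lt_of_le_of_lt hi0 hL1
        exact_mod_cast Nat.lt_one_iff.mp (by exact_mod_cast this)
      rw [hf0]
      have harg : ε * (T - (0:ℕ)) / 2 = ε*L/2 + (2*L + D) := by
        push_cast; field_simp [hT]; rw [hT]; field_simp; ring
      rw [harg, Real.exp_add, hexp2]
      -- need K * n^2 ≤ exp(εL/2) * (n^2 * Δ), i.e. K ≤ exp(εL/2) * Δ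
      have hexpL : 0 < Real.exp (ε*L/2) := Real.exp_pos _
      have hgoal : (S.card:ℝ) ≤ Real.exp (ε*L/2) * Δ := by
        by_cases hε4 : ε ≤ 4
        · -- T ≥ (4L + 2D)/ε ≥ 6 log 2 / 4 > 1, so K ≤ K*T ≤ Δ
          have hT1 : 1 ≤ T := by
            have h1 : 4*L + 2*D ≤ ε * T := by
              have : ε * T = ε * L + (4*L + 2*D) := by field_simp [hT]; rw [hT]; field_simp; ring
              nlinarith
            nlinarith
          have hKΔ : (S.card:ℝ) ≤ Δ := by nlinarith [Nat.cast_nonneg (α := ℝ) S.card]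
          have : (1:ℝ) ≤ Real.exp (ε*L/2) := Real.one_le_exp (by positivity)
          nlinarith
        · push_neg at hε4
          -- K ≤ C = Δ/L and L * exp(εL/2) ≥ 1
          have h1 : 1 + 2*L ≤ Real.exp (ε*L/2) := by
            have h2 : 2*L ≤ ε*L/2 := by nlinarith
            have := Real.add_one_le_exp (2*L)
            have := Real.exp_le_exp.mpr h2
            linarith
          have h2 : 1 ≤ L * Real.exp (ε*L/2) := by nlinarith
          -- C * L = Δ so C ≤ exp(εL/2) * Δ follows from C*L*exp ≥ C i.e. Δ*exp ≥ ...
          have : (C:ℝ) ≤ Real.exp (ε*L/2) * Δ := by nlinarith [Nat.cast_nonneg (α := ℝ) C]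
          linarith
      nlinarith [sq_nonneg n, Nat.cast_nonneg (α := ℝ) S.card]
  -- assemble
  rw [div_le_div_iff₀ hdenpos (by positivity : (0:ℝ) < n^2)]
  have hsplit : Real.exp (-(ε * (f i0:ℝ))/2)
      = Real.exp (ε * (T - (f i0:ℝ)) / 2) * Real.exp (-(ε*T)/2) := by
    rw [← Real.exp_add]; ring_nf
  have hexpT : 0 < Real.exp (-(ε*T)/2) := Real.exp_pos _
  calc (∑ i ∈ S, Real.exp (-(ε*(f i:ℝ))/2)) * n^2
      ≤ ((S.card : ℝ) * Real.exp (-(ε*T)/2)) * n^2 := by nlinarith [sq_nonneg n]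
    _ = ((S.card:ℝ) * n^2) * Real.exp (-(ε*T)/2) := by ring
    _ ≤ Real.exp (ε * (T - (f i0:ℝ)) / 2) * Real.exp (-(ε*T)/2) := by nlinarith
    _ = Real.exp (-(ε * (f i0:ℝ))/2) := hsplit.symm
    _ ≤ ∑ i, Real.exp (-(ε*(f i:ℝ))/2) := hden
    _ = 1 * (∑ i, Real.exp (-(ε*(f i:ℝ))/2)) := by ring
end
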